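/- Let $\overline{\Delta}_{\mathcal{H}} = \partial_r^2 + ((2n-1)\cot r - \tan r)\partial_r + \tan^2 r\, \partial_\theta^2$ be the radial horizontal Laplacian of the Hopf fibration, acting on smooth functions of $(r,\theta) \in (0,\pi/2) \times \mathbb{R}$. For integers $k \ge 0$, $m \ge 0$, the function $f(r,\theta) = e^{ik\theta}(\cos r)^{k} P_m^{n-1,k}(\cos 2r)$ satisfies $\overline{\Delta}_{\mathcal{H}} f = -(4m(m+k+n) + 2kn) f$. -/

import Mathlib

open Real Set

noncomputable section

/-- Jacobi polynomial P_m^{n-1,k} defined by the Rodrigues-type formula. -/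
def jacobiP (n k m : ℕ) : ℝ → ℝ :=
  fun x => ((-1 : ℝ) ^ m / (2 ^ m * (Nat.factorial m) * (1 - x) ^ (n - 1) * (1 + x) ^ k)) *
    iteratedDeriv m (fun y => (1 - y) ^ (n - 1 + m) * (1 + y) ^ (k + m)) x

/-- Radial horizontal Laplacian of the Hopf fibration:
    ∂_r² + ((2n-1) cot r - tan r) ∂_r + tan² r ∂_θ², acting on smooth
    complex-valued functions of (r, θ). -/
def hopfRadialH (n : ℕ) (F : ℝ → ℝ → ℂ) : ℝ → ℝ → ℂ :=
  fun r θ =>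
    deriv (fun s => deriv (fun s' => F s' θ) s) r
    + (((2 * (n : ℝ) - 1) * (Real.cos r / Real.sin r) - Real.tan r : ℝ) : ℂ) *
        deriv (fun s => F s θ) r
    + ((Real.tan r ^ 2 : ℝ) : ℂ) * deriv (fun t => deriv (fun t' => F r t') t) θ

namespace HopfAux

open Polynomial

def jp (A B : ℕ) : Polynomial ℝ := (1 - X) ^ A * (1 + X) ^ B

def ju (A B j : ℕ) : Polynomial ℝ := derivative^[j] (jp A B)

lemma ju_succ (A B j : ℕ) : ju A B (j + 1) = derivative (ju A B j) := by
  simp [ju, Function.iterate_succ_apply']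

lemma jl_first (A B : ℕ) :
    (1 - X ^ 2) * derivative (jp A B) =
      (C ((B : ℝ) - A) - C ((A : ℝ) + B) * X) * jp A B := by
  have h : derivative (jp A B) =
      C (A : ℝ) * (1 - X) ^ (A - 1) * (-1) * (1 + X) ^ B
      + (1 - X) ^ A * (C (B : ℝ) * (1 + X) ^ (B - 1)) := by
    simp [jp, derivative_mul, derivative_pow]
  rw [h, jp]
  cases A with
  | zero =>
    cases B with
    | zero => simp
    | succ B' =>
      simp only [Nat.cast_zero, Nat.cast_succ, Nat.add_sub_cancel, map_zero, map_add, map_sub,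
        map_one, map_natCast, Nat.cast_add, Nat.cast_one, pow_zero]
      ring
  | succ A' =>
    cases B with
    | zero =>
      simp only [Nat.cast_succ, Nat.add_sub_cancel, map_add, map_sub, map_one, map_natCast,
        Nat.cast_add, Nat.cast_one, Nat.cast_zero, map_zero, pow_zero]
      ring
    | succ B' =>
      simp only [Nat.cast_succ, Nat.add_sub_cancel, map_add, map_sub, map_one, map_natCast,
        Nat.cast_add, Nat.cast_one]
      ring

lemma jrec (A B : ℕ) (j : ℕ) :
    (1 - X ^ 2) * derivative (derivative (ju A B j)) =
      ((C ((B : ℝ) - A) - C ((A : ℝ) + B) * X) + C (2 * (j : ℝ) + 2) * X) *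
          derivative (ju A B j)
      + C (((j : ℝ) + 1) * ((j : ℝ) - ((A : ℝ) + B))) * ju A B j := by
  induction j with
  | zero =>
    have h := congrArg derivative (jl_first A B)
    simp only [derivative_mul, derivative_sub, derivative_add, derivative_one, derivative_pow,
      derivative_X, derivative_C, map_sub, map_add, map_mul, map_one, map_zero, map_ofNat,
      map_natCast] at h
    have h0 : ju A B 0 = jp A B := rfl
    rw [h0]
    simp only [map_sub, map_add, map_mul, map_one, map_zero, map_ofNat, map_natCast,
      Nat.cast_zero]
    norm_num at h ⊢
    linear_combination h
  | succ j ih =>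
    have h := congrArg derivative ih
    simp only [derivative_mul, derivative_sub, derivative_add, derivative_one, derivative_pow,
      derivative_X, derivative_C, map_sub, map_add, map_mul, map_one, map_zero, map_ofNat,
      map_natCast] at h
    rw [ju_succ]
    simp only [map_sub, map_add, map_mul, map_one, map_zero, map_ofNat, map_natCast] at h ⊢
    push_cast at h ⊢
    norm_num at h ⊢
    linear_combination h

lemma jrec_eval (A B j : ℕ) (x : ℝ) :
    (1 - x ^ 2) * (ju A B (j + 2)).eval x =
      (((B : ℝ) - A) - ((A : ℝ) + B) * x + (2 * (j : ℝ) + 2) * x) * (ju A B (j + 1)).eval x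
      + (((j : ℝ) + 1) * ((j : ℝ) - ((A : ℝ) + B))) * (ju A B j).eval x := by
  have h := congrArg (Polynomial.eval x) (jrec A B j)
  simp only [eval_mul, eval_add, eval_sub, eval_one, eval_pow, eval_X, eval_C] at h
  rw [show j + 2 = j + 1 + 1 from rfl, ju_succ, ju_succ]
  linear_combination h

lemma polyEval_iteratedDeriv (P : Polynomial ℝ) (j : ℕ) :
    iteratedDeriv j (fun y => P.eval y) = fun x => (derivative^[j] P).eval x := by
  induction j generalizing P with
  | zero => simp
  | succ j ih =>
    rw [iteratedDeriv_succ', show deriv (fun y => P.eval y) = fun y => P.derivative.eval y from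
      funext fun y => Polynomial.deriv P, ih, Function.iterate_succ_apply]

lemma jacobiP_eq (a k m : ℕ) (x : ℝ) :
    jacobiP (a+1) k m x = ((-1:ℝ)^m / (2^m * (Nat.factorial m))) *
      (ju (a+m) (k+m) m).eval x / ((1-x)^a * (1+x)^k) := by
  rw [jacobiP]
  have h : (fun y : ℝ => (1-y)^(a+1-1+m) * (1+y)^(k+m)) = fun y => (jp (a+m) (k+m)).eval y := by
    funext y; simp [jp]
  rw [h, polyEval_iteratedDeriv]
  show _ * (ju (a+m) (k+m) m).eval x = _
  simp only [Nat.add_sub_cancel]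
  ring

lemma hasDerivAt_evalCos2 (P : Polynomial ℝ) (x : ℝ) :
    HasDerivAt (fun y => P.eval (Real.cos (2*y)))
      (P.derivative.eval (Real.cos (2*x)) * (-2 * Real.sin (2*x))) x := by
  have h1 : HasDerivAt (fun y : ℝ => Real.cos (2*y)) (-2 * Real.sin (2*x)) x := by
    have := (Real.hasDerivAt_cos (2*x)).comp x ((hasDerivAt_id x).const_mul 2)
    simpa [Function.comp_def] using this.congr_deriv (by ring)
  have h2 := (P.hasDerivAt (Real.cos (2*x))).comp x h1
  simpa [Function.comp_def] using h2

lemma hasDerivAt_ju_evalCos2 (A B j : ℕ) (x : ℝ) :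
    HasDerivAt (fun y => (ju A B j).eval (Real.cos (2*y)))
      ((ju A B (j+1)).eval (Real.cos (2*x)) * (-2 * Real.sin (2*x))) x := by
  have := hasDerivAt_evalCos2 (ju A B j) x
  rwa [← ju_succ] at this

lemma hasDerivAt_sin_zpow (j : ℤ) {x : ℝ} (hx : Real.sin x ≠ 0) :
    HasDerivAt (fun y => Real.sin y ^ j) ((j:ℝ) * Real.sin x ^ (j-1) * Real.cos x) x := by
  have := (hasDerivAt_zpow j (Real.sin x) (Or.inl hx)).comp x (Real.hasDerivAt_sin x)
  simpa [Function.comp_def] using this.congr_deriv (by ring)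

lemma hasDerivAt_cos_zpow (j : ℤ) {x : ℝ} (hx : Real.cos x ≠ 0) :
    HasDerivAt (fun y => Real.cos y ^ j) (-((j:ℝ) * Real.cos x ^ (j-1) * Real.sin x)) x := by
  have := (hasDerivAt_zpow j (Real.cos x) (Or.inl hx)).comp x (Real.hasDerivAt_cos x)
  simpa [Function.comp_def] using this.congr_deriv (by ring)

lemma zpow_shift {y : ℝ} (hy : y ≠ 0) (i j : ℤ) (t : ℕ) (h : i = j + t) :
    y ^ i = y ^ j * y ^ t := by rw [h, zpow_add₀ hy, zpow_natCast]

/-- The building-block function `q_m(cos 2x) sin^{-2a} x cos^{-k} x`. -/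
def phi0 (a k m : ℕ) : ℝ → ℝ := fun x =>
  (ju (a+m) (k+m) m).eval (Real.cos (2*x)) *
    (Real.sin x ^ (-(2*(a:ℤ))) * Real.cos x ^ (-(k:ℤ)))

/-- Its derivative. -/
def phi1 (a k m : ℕ) : ℝ → ℝ := fun x =>
  (ju (a+m) (k+m) (m+1)).eval (Real.cos (2*x)) *
      (-4 * (Real.sin x ^ (-(2*(a:ℤ))+1) * Real.cos x ^ (-(k:ℤ)+1)))
  + (ju (a+m) (k+m) m).eval (Real.cos (2*x)) *
      ((-(2*(a:ℝ))) * (Real.sin x ^ (-(2*(a:ℤ))-1) * Real.cos x ^ (-(k:ℤ)+1))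
        - (-(k:ℝ)) * (Real.sin x ^ (-(2*(a:ℤ))+1) * Real.cos x ^ (-(k:ℤ)-1)))

/-- Its second derivative. -/
def phi2 (a k m : ℕ) : ℝ → ℝ := fun x =>
  16 * (ju (a+m) (k+m) (m+2)).eval (Real.cos (2*x)) *
      (Real.sin x ^ (-(2*(a:ℤ))+2) * Real.cos x ^ (-(k:ℤ)+2))
  - 4 * (ju (a+m) (k+m) (m+1)).eval (Real.cos (2*x)) *
      ((2*(-(2*(a:ℝ)))+1) * (Real.sin x ^ (-(2*(a:ℤ))) * Real.cos x ^ (-(k:ℤ)+2))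
        - (2*(-(k:ℝ))+1) * (Real.sin x ^ (-(2*(a:ℤ))+2) * Real.cos x ^ (-(k:ℤ))))
  + (ju (a+m) (k+m) m).eval (Real.cos (2*x)) *
      ((-(2*(a:ℝ)))*((-(2*(a:ℝ)))-1) * (Real.sin x ^ (-(2*(a:ℤ))-2) * Real.cos x ^ (-(k:ℤ)+2))
        - (2*(-(2*(a:ℝ)))*(-(k:ℝ)) + (-(2*(a:ℝ))) + (-(k:ℝ))) *
            (Real.sin x ^ (-(2*(a:ℤ))) * Real.cos x ^ (-(k:ℤ)))
        + (-(k:ℝ))*((-(k:ℝ))-1) * (Real.sin x ^ (-(2*(a:ℤ))+2) * Real.cos x ^ (-(k:ℤ)-2)))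

lemma hasDerivAt_phi0 (a k m : ℕ) {x : ℝ} (hs : Real.sin x ≠ 0) (hc : Real.cos x ≠ 0) :
    HasDerivAt (phi0 a k m) (phi1 a k m x) x := by
  have h := (hasDerivAt_ju_evalCos2 (a+m) (k+m) m x).mul
    ((hasDerivAt_sin_zpow (-(2*(a:ℤ))) hs).mul (hasDerivAt_cos_zpow (-(k:ℤ)) hc))
  refine (h : HasDerivAt (phi0 a k m) _ x).congr_deriv ?_
  simp only [phi1, Pi.mul_apply, Pi.sub_apply]
  rw [Real.sin_two_mul,
    zpow_shift hs (-(2*(a:ℤ))+1) (-(2*(a:ℤ))-1) 2 (by ring),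
    zpow_shift hs (-(2*(a:ℤ))) (-(2*(a:ℤ))-1) 1 (by ring),
    zpow_shift hc (-(k:ℤ)+1) (-(k:ℤ)-1) 2 (by ring),
    zpow_shift hc (-(k:ℤ)) (-(k:ℤ)-1) 1 (by ring)]
  push_cast
  ring

lemma hasDerivAt_phi1 (a k m : ℕ) {x : ℝ} (hs : Real.sin x ≠ 0) (hc : Real.cos x ≠ 0) :
    HasDerivAt (phi1 a k m) (phi2 a k m x) x := by
  have h := ((hasDerivAt_ju_evalCos2 (a+m) (k+m) (m+1) x).mul
      (((hasDerivAt_sin_zpow (-(2*(a:ℤ))+1) hs).mul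
        (hasDerivAt_cos_zpow (-(k:ℤ)+1) hc)).const_mul (-4))).add
    ((hasDerivAt_ju_evalCos2 (a+m) (k+m) m x).mul
      ((((hasDerivAt_sin_zpow (-(2*(a:ℤ))-1) hs).mul
          (hasDerivAt_cos_zpow (-(k:ℤ)+1) hc)).const_mul (-(2*(a:ℝ)))).sub
        (((hasDerivAt_sin_zpow (-(2*(a:ℤ))+1) hs).mul
          (hasDerivAt_cos_zpow (-(k:ℤ)-1) hc)).const_mul (-(k:ℝ)))))
  refine (h : HasDerivAt (phi1 a k m) _ x).congr_deriv ?_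
  simp only [phi2, Pi.mul_apply, Pi.sub_apply]
  rw [Real.sin_two_mul,
    zpow_shift hs (-(2*(a:ℤ))+2) (-(2*(a:ℤ))-2) 4 (by ring),
    zpow_shift hs (-(2*(a:ℤ))+1) (-(2*(a:ℤ))-2) 3 (by ring),
    zpow_shift hs (-(2*(a:ℤ))+1-1) (-(2*(a:ℤ))-2) 2 (by ring),
    zpow_shift hs (-(2*(a:ℤ))) (-(2*(a:ℤ))-2) 2 (by ring),
    zpow_shift hs (-(2*(a:ℤ))-1) (-(2*(a:ℤ))-2) 1 (by ring),
    zpow_shift hs (-(2*(a:ℤ))-1-1) (-(2*(a:ℤ))-2) 0 (by ring),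
    zpow_shift hc (-(k:ℤ)+2) (-(k:ℤ)-2) 4 (by ring),
    zpow_shift hc (-(k:ℤ)+1) (-(k:ℤ)-2) 3 (by ring),
    zpow_shift hc (-(k:ℤ)+1-1) (-(k:ℤ)-2) 2 (by ring),
    zpow_shift hc (-(k:ℤ)) (-(k:ℤ)-2) 2 (by ring),
    zpow_shift hc (-(k:ℤ)-1) (-(k:ℤ)-2) 1 (by ring),
    zpow_shift hc (-(k:ℤ)-1-1) (-(k:ℤ)-2) 0 (by ring)]
  push_cast
  ring

def Cst (a k m : ℕ) : ℝ := (-1:ℝ)^m / (2^m * (Nat.factorial m) * 2^(a+k))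

lemma phi0_eq (a k m : ℕ) {x : ℝ} (hs : 0 < Real.sin x) (hc : 0 < Real.cos x) :
    Real.cos x ^ k * jacobiP (a+1) k m (Real.cos (2*x)) = Cst a k m * phi0 a k m x := by
  rw [jacobiP_eq]
  have h1 : 1 - Real.cos (2*x) = 2 * Real.sin x ^ 2 := by
    rw [Real.cos_two_mul']; linear_combination -Real.sin_sq_add_cos_sq x
  have h2 : 1 + Real.cos (2*x) = 2 * Real.cos x ^ 2 := by
    rw [Real.cos_two_mul']; linear_combination -Real.sin_sq_add_cos_sq x
  rw [h1, h2, phi0, Cst]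
  rw [show (-(2*(a:ℤ))) = -((2*a : ℕ) : ℤ) by push_cast; ring,
    show (-(k:ℤ)) = -((k : ℕ) : ℤ) by simp, zpow_neg, zpow_neg, zpow_natCast, zpow_natCast,
    mul_pow, mul_pow]
  have hfa : (Nat.factorial m : ℝ) ≠ 0 := Nat.cast_ne_zero.2 m.factorial_ne_zero
  have h2m : (2:ℝ)^m ≠ 0 := pow_ne_zero _ two_ne_zero
  have h2a : (2:ℝ)^a ≠ 0 := pow_ne_zero _ two_ne_zero
  have h2k : (2:ℝ)^k ≠ 0 := pow_ne_zero _ two_ne_zero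
  have hsk : Real.sin x ^ (2*a) ≠ 0 := pow_ne_zero _ hs.ne'
  have hck : Real.cos x ^ (2*k) ≠ 0 := pow_ne_zero _ hc.ne'
  field_simp
  ring

lemma key_identity (a k m : ℕ) {r : ℝ} (hs : 0 < Real.sin r) (hc : 0 < Real.cos r) :
    phi2 a k m r + ((2*((a:ℝ)+1)-1) * (Real.cos r / Real.sin r) - Real.tan r) * phi1 a k m r
      - (k:ℝ)^2 * Real.tan r ^ 2 * phi0 a k m r
    = -(4*(m:ℝ)*((m:ℝ)+(k:ℝ)+((a:ℝ)+1)) + 2*(k:ℝ)*((a:ℝ)+1)) * phi0 a k m r := by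
  have hs' := hs.ne'
  have hc' := hc.ne'
  have hpy := Real.sin_sq_add_cos_sq r
  have hsi : Real.sin r * (Real.sin r)⁻¹ = 1 := mul_inv_cancel₀ hs'
  have hci : Real.cos r * (Real.cos r)⁻¹ = 1 := mul_inv_cancel₀ hc'
  have hq2 := jrec_eval (a+m) (k+m) m (Real.cos (2*r))
  rw [Real.cos_two_mul' r] at hq2
  push_cast at hq2
  simp only [phi0, phi1, phi2]
  rw [Real.tan_eq_sin_div_cos, Real.cos_two_mul' r,
    zpow_shift hs' (-(2*(a:ℤ))+2) (-(2*(a:ℤ))-2) 4 (by ring),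
    zpow_shift hs' (-(2*(a:ℤ))+1) (-(2*(a:ℤ))-2) 3 (by ring),
    zpow_shift hs' (-(2*(a:ℤ))) (-(2*(a:ℤ))-2) 2 (by ring),
    zpow_shift hs' (-(2*(a:ℤ))-1) (-(2*(a:ℤ))-2) 1 (by ring),
    zpow_shift hc' (-(k:ℤ)+2) (-(k:ℤ)-2) 4 (by ring),
    zpow_shift hc' (-(k:ℤ)+1) (-(k:ℤ)-2) 3 (by ring),
    zpow_shift hc' (-(k:ℤ)) (-(k:ℤ)-2) 2 (by ring),
    zpow_shift hc' (-(k:ℤ)-1) (-(k:ℤ)-2) 1 (by ring)]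
  set s := Real.sin r
  set c := Real.cos r
  set S := s ^ (-(2*(a:ℤ))-2) with hS
  set Cc := c ^ (-(k:ℤ)-2) with hC
  set Q0 := (ju (a+m) (k+m) m).eval (c^2 - s^2) with hQ0
  set Q1 := (ju (a+m) (k+m) (m+1)).eval (c^2 - s^2) with hQ1
  set Q2 := (ju (a+m) (k+m) (m+2)).eval (c^2 - s^2) with hQ2
  linear_combination
    (S*Cc*(Q0*((k:ℝ)*s^2*c^2 + 2*(a:ℝ)*(k:ℝ)*s^2*c^2 - 2*(a:ℝ)*c^4 - 4*(a:ℝ)^2*c^4)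
      - 4*s^2*c^4*Q1 - 8*(a:ℝ)*s^2*c^4*Q1)) * hsi
    + (S*Cc*(Q0*(2*(a:ℝ)*s^2*c^2 - (k:ℝ)*s^4 - (k:ℝ)^2*s^4 - (k:ℝ)^2*s^4*c*c⁻¹)
      + 4*s^4*c^2*Q1)) * hci
    + (4*S*Cc*s^2*c^2) * hq2
    + (S*Cc*(4*s^2*c^2*Q2 - 4*(k:ℝ)*s^2*c^2*Q1 + 4*(a:ℝ)*s^2*c^2*Q1
      + 4*s^2*c^4*Q2 + 4*s^4*c^2*Q2)) * hpy

end HopfAux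

/-- The functions e^{ikθ}(cos r)^k P_m^{n-1,k}(cos 2r) are eigenfunctions of the
    radial horizontal Laplacian with eigenvalue -(4m(m+k+n) + 2kn). -/
theorem hopf_eigenfunctions (n k m : ℕ) (hn : 1 ≤ n) :
    ∀ r ∈ Ioo (0:ℝ) (Real.pi / 2), ∀ θ : ℝ,
      hopfRadialH n
        (fun r' θ' => Complex.exp ((k : ℂ) * θ' * Complex.I) *
          ((Real.cos r' ^ k * jacobiP n k m (Real.cos (2 * r')) : ℝ) : ℂ)) r θ =
      -((4 * (m : ℂ) * (m + k + n) + 2 * k * n)) *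
        (Complex.exp ((k : ℂ) * θ * Complex.I) *
          ((Real.cos r ^ k * jacobiP n k m (Real.cos (2 * r)) : ℝ) : ℂ)) := by
  obtain ⟨a, rfl⟩ : ∃ a, n = a + 1 := ⟨n - 1, by omega⟩
  intro r hr θ
  obtain ⟨hr1, hr2⟩ := hr
  have hIoo : ∀ x ∈ Ioo (0:ℝ) (Real.pi/2), 0 < Real.sin x ∧ 0 < Real.cos x := by
    intro x hx
    exact ⟨Real.sin_pos_of_pos_of_lt_pi hx.1 (lt_trans hx.2 (by linarith [Real.pi_pos])),
      Real.cos_pos_of_mem_Ioo ⟨by linarith [Real.pi_pos, hx.1], hx.2⟩⟩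
  have hrmem : r ∈ Ioo (0:ℝ) (Real.pi/2) := ⟨hr1, hr2⟩
  obtain ⟨hsr, hcr⟩ := hIoo r hrmem
  -- first derivative of the radial part, on the whole interval
  have hG1 : ∀ x ∈ Ioo (0:ℝ) (Real.pi/2),
      HasDerivAt (fun r' => Real.cos r' ^ k * jacobiP (a+1) k m (Real.cos (2 * r')))
        (HopfAux.Cst a k m * HopfAux.phi1 a k m x) x := by
    intro x hx
    obtain ⟨hsx, hcx⟩ := hIoo x hx
    refine ((HopfAux.hasDerivAt_phi0 a k m hsx.ne' hcx.ne').const_mul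
      (HopfAux.Cst a k m)).congr_of_eventuallyEq ?_
    exact Filter.eventuallyEq_of_mem (isOpen_Ioo.mem_nhds hx)
      (fun y hy => HopfAux.phi0_eq a k m (hIoo y hy).1 (hIoo y hy).2)
  -- the θ-derivatives
  have hexp : ∀ t : ℝ, HasDerivAt (fun t' : ℝ => Complex.exp ((k:ℂ) * t' * Complex.I))
      ((k:ℂ) * Complex.I * Complex.exp ((k:ℂ) * t * Complex.I)) t := by
    intro t
    have h0 : HasDerivAt (fun t' : ℝ => ((t' : ℝ) : ℂ)) 1 t := Complex.ofRealCLM.hasDerivAt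
    have h1 : HasDerivAt (fun t' : ℝ => (k:ℂ) * t' * Complex.I) ((k:ℂ) * Complex.I) t := by
      simpa using ((h0.const_mul (k:ℂ)).mul_const Complex.I).congr_deriv (by ring)
    simpa using (h1.cexp).congr_deriv (by ring)
  have hθ1 : (fun t : ℝ => deriv (fun t' : ℝ => Complex.exp ((k:ℂ) * (t' : ℂ) * Complex.I) *
      ((Real.cos r ^ k * jacobiP (a+1) k m (Real.cos (2 * r)) : ℝ) : ℂ)) t)
      = fun t : ℝ => (k:ℂ) * Complex.I * (Complex.exp ((k:ℂ) * (t : ℂ) * Complex.I) *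
        ((Real.cos r ^ k * jacobiP (a+1) k m (Real.cos (2 * r)) : ℝ) : ℂ)) := by
    funext t
    exact (((hexp t).mul_const _).congr_deriv (by ring)).deriv
  have hθ2 : deriv (fun t : ℝ => deriv (fun t' : ℝ => Complex.exp ((k:ℂ) * (t' : ℂ) * Complex.I) *
      ((Real.cos r ^ k * jacobiP (a+1) k m (Real.cos (2 * r)) : ℝ) : ℂ)) t) θ
      = (k:ℂ) * Complex.I * ((k:ℂ) * Complex.I * (Complex.exp ((k:ℂ) * θ * Complex.I) *
        ((Real.cos r ^ k * jacobiP (a+1) k m (Real.cos (2 * r)) : ℝ) : ℂ))) := by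
    rw [hθ1]
    exact ((((hexp θ).mul_const _).const_mul _).congr_deriv (by ring)).deriv
  -- radial first derivative
  have hr1d : deriv (fun s => Complex.exp ((k:ℂ) * θ * Complex.I) *
      ((Real.cos s ^ k * jacobiP (a+1) k m (Real.cos (2 * s)) : ℝ) : ℂ)) r
      = Complex.exp ((k:ℂ) * θ * Complex.I) *
        ((HopfAux.Cst a k m * HopfAux.phi1 a k m r : ℝ) : ℂ) :=
    (((hG1 r hrmem).ofReal_comp).const_mul _).deriv
  -- radial second derivative
  have hr2d : deriv (fun s => deriv (fun s' => Complex.exp ((k:ℂ) * θ * Complex.I) *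
      ((Real.cos s' ^ k * jacobiP (a+1) k m (Real.cos (2 * s')) : ℝ) : ℂ)) s) r
      = Complex.exp ((k:ℂ) * θ * Complex.I) *
        ((HopfAux.Cst a k m * HopfAux.phi2 a k m r : ℝ) : ℂ) := by
    have heq : (fun s => deriv (fun s' => Complex.exp ((k:ℂ) * θ * Complex.I) *
        ((Real.cos s' ^ k * jacobiP (a+1) k m (Real.cos (2 * s')) : ℝ) : ℂ)) s)
        =ᶠ[nhds r] fun s => Complex.exp ((k:ℂ) * θ * Complex.I) *
          ((HopfAux.Cst a k m * HopfAux.phi1 a k m s : ℝ) : ℂ) := by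
      refine Filter.eventuallyEq_of_mem (isOpen_Ioo.mem_nhds hrmem) (fun y hy => ?_)
      exact (((hG1 y hy).ofReal_comp).const_mul _).deriv
    rw [heq.deriv_eq]
    have h2 := ((HopfAux.hasDerivAt_phi1 a k m hsr.ne' hcr.ne').const_mul
      (HopfAux.Cst a k m)).ofReal_comp.const_mul (Complex.exp ((k:ℂ) * θ * Complex.I))
    exact h2.deriv
  -- the real key identity, multiplied by Cst
  have hkey : HopfAux.Cst a k m * HopfAux.phi2 a k m r
      + ((2*((a+1 : ℕ):ℝ) - 1) * (Real.cos r / Real.sin r) - Real.tan r) *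
          (HopfAux.Cst a k m * HopfAux.phi1 a k m r)
      - (k:ℝ)^2 * Real.tan r ^ 2 *
          (Real.cos r ^ k * jacobiP (a+1) k m (Real.cos (2 * r)))
      = -(4*(m:ℝ)*((m:ℝ)+(k:ℝ)+((a:ℝ)+1)) + 2*(k:ℝ)*((a:ℝ)+1)) *
          (Real.cos r ^ k * jacobiP (a+1) k m (Real.cos (2 * r))) := by
    rw [HopfAux.phi0_eq a k m hsr hcr]
    push_cast
    linear_combination (HopfAux.Cst a k m) * HopfAux.key_identity a k m hsr hcr
  -- assemble
  simp only [hopfRadialH]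
  rw [hr2d, hr1d, hθ2]
  have hkeyC := congrArg (fun t : ℝ => (t : ℂ)) hkey
  have hI : Complex.I * Complex.I = -1 := Complex.I_mul_I
  simp only [Complex.ofReal_mul, Complex.ofReal_sub, Complex.ofReal_add, Complex.ofReal_div,
    Complex.ofReal_pow, Complex.ofReal_neg, Complex.ofReal_one, Complex.ofReal_ofNat,
    Complex.ofReal_natCast, Nat.cast_add, Nat.cast_one] at hkeyC ⊢
  linear_combination (Complex.exp ((k:ℂ) * θ * Complex.I)) * hkeyC
    + ((Real.tan r : ℂ)^2 * (k:ℂ)^2 * Complex.exp ((k:ℂ) * θ * Complex.I) *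
        ((Real.cos r : ℝ) : ℂ)^k * ((jacobiP (a+1) k m (Real.cos (2 * r)) : ℝ) : ℂ)) * hI

end
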